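/- arXiv:1108.1886 — 2 statements merged into one kernel-verified Lean document; each statement's English description precedes it below -/
import Mathlib

section
/- Let Σ be a fan in ℝ^r such that the support of its (r-1)-dimensional cones equals a union of linear hyperplanes H_1 ∪ … ∪ H_n and Σ is complete. Then for every τ ∈ Σ of dimension r-1 and every σ ∈ Σ, the set σ ∩ span(τ) is a face of σ and hence an element of Σ. -/
open scoped Classical Pointwise BigOperators

noncomputable section

abbrev Vr (r : ℕ) : Type := Fin r → ℝ

/-- The convex cone generated by a finite set of vectors. -/
def coneGen {M : Type*} [AddCommGroup M] [Module ℝ M] (s : Finset M) : Set M :=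
  { x | ∃ c : M → ℝ, (∀ v, 0 ≤ c v) ∧ x = ∑ v ∈ s, c v • v }

/-- Dimension of the linear span of a set. -/
def spanDim {M : Type*} [AddCommGroup M] [Module ℝ M] (s : Set M) : ℕ :=
  Module.finrank ℝ (Submodule.span ℝ s)

/-- A (linear) hyperplane: the kernel of a nonzero linear functional. -/
def IsHyp {M : Type*} [AddCommGroup M] [Module ℝ M] (H : Set M) : Prop :=
  ∃ f : M →ₗ[ℝ] ℝ, f ≠ 0 ∧ H = {x | f x = 0}

/-- A strongly convex rational polyhedral cone with respect to the lattice `N`. -/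
def IsNCone {r : ℕ} (N : AddSubgroup (Vr r)) (σ : Set (Vr r)) : Prop :=
  ∃ s : Finset (Vr r), ↑s ⊆ (N : Set (Vr r)) ∧ σ = coneGen s ∧ σ ∩ (-σ) ⊆ {0}

/-- `τ` is a face of `σ`. -/
def IsFaceOf {M : Type*} [AddCommGroup M] [Module ℝ M] (τ σ : Set M) : Prop :=
  ∃ m : M →ₗ[ℝ] ℝ, (∀ x ∈ σ, 0 ≤ m x) ∧ τ = σ ∩ {x | m x = 0}

/-- A fan in the lattice `N`. -/
structure IsFan {r : ℕ} (N : AddSubgroup (Vr r)) (F : Set (Set (Vr r))) : Prop where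
  finite : F.Finite
  nonempty : F.Nonempty
  cones : ∀ σ ∈ F, IsNCone N σ
  faces : ∀ σ ∈ F, ∀ τ : Set (Vr r), IsFaceOf τ σ → τ ∈ F
  inter : ∀ σ₁ ∈ F, ∀ σ₂ ∈ F, IsFaceOf (σ₁ ∩ σ₂) σ₁ ∧ IsFaceOf (σ₁ ∩ σ₂) σ₂

/-- Completeness: the support is everything. -/
def FanComplete {M : Type*} (F : Set (Set M)) : Prop := ⋃₀ F = Set.univ

/-- Strong symmetry: complete, and the support of the codimension-one cones is a
finite union of hyperplanes. -/
def SSymm {M : Type*} [AddCommGroup M] [Module ℝ M] (F : Set (Set M)) : Prop :=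
  FanComplete F ∧ ∃ Hs : Finset (Set M), (∀ h ∈ Hs, IsHyp h) ∧
    ⋃₀ {τ ∈ F | spanDim τ = Module.finrank ℝ M - 1} = ⋃₀ ↑Hs

/-- Central symmetry. -/
def CSymm {M : Type*} [AddCommGroup M] (F : Set (Set M)) : Prop := ∀ σ ∈ F, -σ ∈ F

/-- `b` is a ℤ-basis of the subgroup `L` of `ℝ^r`. -/
def IsZBasis {r d : ℕ} (L : AddSubgroup (Vr r)) (b : Fin d → Vr r) : Prop :=
  LinearIndependent ℝ b ∧ AddSubgroup.closure (Set.range b) = L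

/-- A (full-rank) lattice in `ℝ^r`. -/
def IsLattice {r : ℕ} (N : AddSubgroup (Vr r)) : Prop :=
  ∃ b : Fin r → Vr r, IsZBasis N b

/-- A cone generated by a part of a ℤ-basis of `L`. -/
def SmoothCone {r : ℕ} (L : AddSubgroup (Vr r)) (σ : Set (Vr r)) : Prop :=
  ∃ (d : ℕ) (b : Fin d → Vr r) (s : Finset (Fin d)),
    IsZBasis L b ∧ σ = coneGen (s.image b)

/-- Chambers of an arrangement: connected components of the complement. -/
def chambers {r : ℕ} (A : Finset (Set (Vr r))) : Set (Set (Vr r)) :=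
  { K | ∃ x ∈ (⋃₀ (A : Set (Set (Vr r))))ᶜ,
      K = connectedComponentIn (⋃₀ (A : Set (Set (Vr r))))ᶜ x }

/-- An open simplicial cone of full dimension. -/
def IsOpenSimplicialCone {r : ℕ} (K : Set (Vr r)) : Prop :=
  ∃ b : Fin r → Vr r, LinearIndependent ℝ b ∧
    K = { x | ∃ c : Fin r → ℝ, (∀ i, 0 < c i) ∧ x = ∑ i, c i • b i }

def ker0 {r : ℕ} (α : Vr r →ₗ[ℝ] ℝ) : Set (Vr r) := {x | α x = 0}

/-- Walls of a chamber `K`. -/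
def walls {r : ℕ} (A : Finset (Set (Vr r))) (K : Set (Vr r)) : Set (Set (Vr r)) :=
  { H | H ∈ A ∧ spanDim (H ∩ closure K) = r - 1 }

/-- The set `B^K` of inward-pointing normals of the walls of `K`. -/
def BK {r : ℕ} (A : Finset (Set (Vr r))) (R : Finset (Vr r →ₗ[ℝ] ℝ)) (K : Set (Vr r)) :
    Finset (Vr r →ₗ[ℝ] ℝ) :=
  R.filter (fun α => ker0 α ∈ walls A K ∧ K ⊆ {x | 0 ≤ α x})

/-- A crystallographic arrangement `(A, R)`. -/
structure IsCrystArr {r : ℕ} (A : Finset (Set (Vr r))) (R : Finset (Vr r →ₗ[ℝ] ℝ)) : Prop where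
  simplicial : ∀ K ∈ chambers A, IsOpenSimplicialCone K
  hyps : (A : Set (Set (Vr r))) = (fun α => ker0 α) '' (R : Set (Vr r →ₗ[ℝ] ℝ))
  nonzero : ∀ α ∈ R, α ≠ 0
  neg_mem : ∀ α ∈ R, -α ∈ R
  reduced : ∀ α ∈ R, ∀ β ∈ R, (∃ c : ℝ, β = c • α) → β = α ∨ β = -α
  integral : ∀ K ∈ chambers A, ∀ β ∈ R,
    β ∈ Submodule.span ℤ ((BK A R K : Set (Vr r →ₗ[ℝ] ℝ)))

/-- The set of all intersections of closed chambers of `A`. -/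
def closedChamberInts {r : ℕ} (A : Finset (Set (Vr r))) : Set (Set (Vr r)) :=
  { σ | ∃ S : Set (Set (Vr r)), S.Nonempty ∧ S ⊆ chambers A ∧ σ = ⋂₀ (closure '' S) }

/-- The lattice dual to `M_R = ∑_{α ∈ R} ℤ α`. -/
def dualLattice {r : ℕ} (R : Finset (Vr r →ₗ[ℝ] ℝ)) : AddSubgroup (Vr r) where
  carrier := { x | ∀ α ∈ R, ∃ k : ℤ, α x = k }
  zero_mem' := fun α _ => ⟨0, by simp⟩
  add_mem' := by
    intro x y hx hy α hα
    obtain ⟨k, hk⟩ := hx α hα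
    obtain ⟨m, hm⟩ := hy α hα
    exact ⟨k + m, by simp [hk, hm]⟩
  neg_mem' := by
    intro x hx α hα
    obtain ⟨k, hk⟩ := hx α hα
    exact ⟨-k, by simp [hk]⟩

/-- The star fan of `δ`, as a collection of cones in the quotient by `E`. -/
def starAt {r : ℕ} (F : Set (Set (Vr r))) (δ : Set (Vr r)) (E : Submodule ℝ (Vr r)) :
    Set (Set (Vr r ⧸ E)) :=
  { τ | ∃ σ ∈ F, δ ⊆ σ ∧ τ = E.mkQ '' σ }

/-- The positive roots `R_+^K` at the chamber `K`. -/
def RplusF {r : ℕ} (A : Finset (Set (Vr r))) (R : Finset (Vr r →ₗ[ℝ] ℝ)) (K : Set (Vr r)) :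
    Finset (Vr r →ₗ[ℝ] ℝ) :=
  R.filter (fun α => α ∈ coneGen (BK A R K))

/-- `ρ^K`, the half-sum of the positive roots at `K`. -/
def rhoK {r : ℕ} (A : Finset (Set (Vr r))) (R : Finset (Vr r →ₗ[ℝ] ℝ)) (K : Set (Vr r)) :
    Vr r →ₗ[ℝ] ℝ :=
  (1/2 : ℝ) • ∑ α ∈ RplusF A R K, α

end


section AuxProofs

variable {M : Type*} [AddCommGroup M] [Module ℝ M]

lemma coneGen_zero_mem (s : Finset M) : (0 : M) ∈ coneGen s :=
  ⟨0, fun _ => le_refl 0, by simp⟩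

lemma coneGen_combo {s : Finset M} {a b : M} (ha : a ∈ coneGen s) (hb : b ∈ coneGen s)
    {p q : ℝ} (hp : 0 ≤ p) (hq : 0 ≤ q) : p • a + q • b ∈ coneGen s := by
  obtain ⟨c, hc, rfl⟩ := ha
  obtain ⟨d, hd, rfl⟩ := hb
  refine ⟨fun v => p * c v + q * d v,
    fun v => add_nonneg (mul_nonneg hp (hc v)) (mul_nonneg hq (hd v)), ?_⟩
  rw [Finset.smul_sum, Finset.smul_sum, ← Finset.sum_add_distrib]
  exact Finset.sum_congr rfl fun v _ => by rw [smul_smul, smul_smul, add_smul]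

lemma coneGen_mono {s t : Finset M} (h : t ⊆ s) : coneGen t ⊆ coneGen s := by
  classical
  rintro x ⟨c, hc, rfl⟩
  have hnn : ∀ v, (0:ℝ) ≤ if v ∈ t then c v else 0 := by
    intro v
    split
    · exact hc v
    · exact le_refl 0
  refine ⟨fun v => if v ∈ t then c v else 0, hnn, ?_⟩
  have h1 : ∑ v ∈ t, c v • v = ∑ v ∈ t, (if v ∈ t then c v else 0) • v :=
    Finset.sum_congr rfl fun v hv => by rw [if_pos hv]
  rw [h1]
  exact Finset.sum_subset h (fun v _ hvt => by rw [if_neg hvt, zero_smul])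

lemma coneGen_cara (n : ℕ) : ∀ (t : Finset M) (c : M → ℝ), t.card ≤ n → (∀ v, 0 ≤ c v) →
    ∃ u : Finset M, u ⊆ t ∧ LinearIndependent ℝ (fun i : ↥u => (i : M)) ∧
      (∑ v ∈ t, c v • v) ∈ coneGen u := by
  classical
  induction n with
  | zero =>
    intro t c ht _
    have hte : t = ∅ := Finset.card_eq_zero.mp (Nat.le_zero.mp ht)
    subst hte
    have hie : IsEmpty (↥(∅ : Finset M)) := ⟨fun x => (Finset.notMem_empty _ x.2)⟩
    exact ⟨∅, Finset.Subset.refl _, linearIndependent_empty_type, by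
      simpa using coneGen_zero_mem (∅ : Finset M)⟩
  | succ n ih =>
    intro t c ht hc
    by_cases hli : LinearIndependent ℝ (fun i : ↥t => (i : M))
    · exact ⟨t, Finset.Subset.refl t, hli, ⟨c, hc, rfl⟩⟩
    obtain ⟨gc, hgsum, i₀, hgi₀⟩ := Fintype.not_linearIndependent_iff.mp hli
    have hrel : ∀ e : ↥t → ℝ,
        (∑ i, e i • (i : M)) = ∑ v ∈ t, (fun v => if h : v ∈ t then e ⟨v, h⟩ else 0) v • v := by
      intro e
      rw [← Finset.sum_coe_sort t (fun v => (if h : v ∈ t then e ⟨v, h⟩ else 0) • v)]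
      exact Finset.sum_congr rfl fun i _ => by rw [dif_pos i.2]
    obtain ⟨e, hes, i₁, hi₁⟩ : ∃ e : ↥t → ℝ, (∑ i, e i • (i : M)) = 0 ∧ ∃ i, 0 < e i := by
      rcases hgi₀.lt_or_gt with h | h
      · refine ⟨-gc, ?_, i₀, by simpa using h⟩
        have : ∑ i, (-gc) i • (i : M) = -∑ i, gc i • (i : M) := by
          rw [← Finset.sum_neg_distrib]
          exact Finset.sum_congr rfl fun i _ => by simp
        rw [this, hgsum, neg_zero]
      · exact ⟨gc, hgsum, i₀, h⟩
    set d : M → ℝ := fun v => if h : v ∈ t then e ⟨v, h⟩ else 0 with hd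
    have hd0 : ∑ v ∈ t, d v • v = 0 := by rw [← hrel e]; exact hes
    have hd1 : 0 < d ↑i₁ := by rw [hd]; simpa only [dif_pos i₁.2, Subtype.coe_eta] using hi₁
    set P := t.filter (fun v => 0 < d v) with hP
    have hPne : P.Nonempty := ⟨↑i₁, Finset.mem_filter.mpr ⟨i₁.2, hd1⟩⟩
    obtain ⟨v₀, hv₀P, hv₀min⟩ := Finset.exists_min_image P (fun v => c v / d v) hPne
    have hv₀t : v₀ ∈ t := (Finset.mem_filter.mp hv₀P).1
    have hdv₀ : 0 < d v₀ := (Finset.mem_filter.mp hv₀P).2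
    set lam := c v₀ / d v₀ with hlam
    have hlam0 : 0 ≤ lam := div_nonneg (hc v₀) hdv₀.le
    set c' : M → ℝ := fun v => if v ∈ t.erase v₀ then c v - lam * d v else 0 with hc'
    have hc'0 : ∀ v, 0 ≤ c' v := by
      intro v
      rw [hc']
      dsimp only
      split
      · rename_i hv
        rcases le_or_gt (d v) 0 with hdv | hdv
        · nlinarith [hc v]
        · have hvP : v ∈ P := Finset.mem_filter.mpr ⟨Finset.mem_of_mem_erase hv, hdv⟩
          have hmin := hv₀min v hvP
          have := (le_div_iff₀ hdv).mp hmin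
          linarith
      · exact le_refl 0
    have hsum' : ∑ v ∈ t.erase v₀, c' v • v = ∑ v ∈ t, c v • v := by
      have h1 : ∑ v ∈ t.erase v₀, c' v • v = ∑ v ∈ t.erase v₀, (c v - lam * d v) • v :=
        Finset.sum_congr rfl fun v hv => by rw [hc']; dsimp only; rw [if_pos hv]
      have hzero : (c v₀ - lam * d v₀) • v₀ = 0 := by
        rw [hlam, div_mul_cancel₀ _ hdv₀.ne', sub_self, zero_smul]
      have h2 : ∑ v ∈ t.erase v₀, (c v - lam * d v) • v = ∑ v ∈ t, (c v - lam * d v) • v :=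
        Finset.sum_erase t hzero
      have h3 : ∑ v ∈ t, (c v - lam * d v) • v
          = ∑ v ∈ t, c v • v - lam • ∑ v ∈ t, d v • v := by
        rw [Finset.smul_sum, ← Finset.sum_sub_distrib]
        exact Finset.sum_congr rfl fun v _ => by rw [sub_smul, smul_smul]
      rw [h1, h2, h3, hd0, smul_zero, sub_zero]
    obtain ⟨u, hu1, hu2, hu3⟩ := ih (t.erase v₀) c'
      (by have := Finset.card_erase_of_mem hv₀t; omega) hc'0
    exact ⟨u, hu1.trans (Finset.erase_subset _ _), hu2, by rwa [hsum'] at hu3⟩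

lemma isClosed_coneGen_li {r : ℕ} (u : Finset (Vr r))
    (h : LinearIndependent ℝ (fun i : ↥u => (i : Vr r))) : IsClosed (coneGen u) := by
  classical
  set φ : (↥u → ℝ) →ₗ[ℝ] Vr r := Fintype.linearCombination ℝ (fun i : ↥u => (i : Vr r)) with hφ
  have hφa : ∀ cc : ↥u → ℝ, φ cc = ∑ i, cc i • (i : Vr r) := fun cc => rfl
  have hker : LinearMap.ker φ = ⊥ := by
    rw [LinearMap.ker_eq_bot']
    intro cc hcc
    exact funext (Fintype.linearIndependent_iff.mp h cc (by rw [← hφa]; exact hcc))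
  have him : coneGen u = φ '' {cc : ↥u → ℝ | ∀ i, 0 ≤ cc i} := by
    ext x
    constructor
    · rintro ⟨c, hc, rfl⟩
      refine ⟨fun i => c ↑i, fun i => hc _, ?_⟩
      rw [hφa]
      exact Finset.sum_coe_sort u (fun v => c v • v)
    · rintro ⟨cc, hcc, rfl⟩
      refine ⟨fun v => if h : v ∈ u then cc ⟨v, h⟩ else 0, fun v => ?_, ?_⟩
      · dsimp only; split
        · exact hcc _
        · exact le_refl 0
      · rw [hφa, ← Finset.sum_coe_sort u (fun v => (if h : v ∈ u then cc ⟨v, h⟩ else 0) • v)]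
        exact Finset.sum_congr rfl fun i _ => by rw [dif_pos i.2]
  rw [him]
  have hclosedset : IsClosed {cc : ↥u → ℝ | ∀ i, 0 ≤ cc i} := by
    have heq : {cc : ↥u → ℝ | ∀ i, 0 ≤ cc i} = ⋂ i, {cc : ↥u → ℝ | 0 ≤ cc i} := by
      ext; simp [Set.mem_iInter]
    rw [heq]
    exact isClosed_iInter fun i => isClosed_le continuous_const (continuous_apply i)
  exact ((LinearMap.isClosedEmbedding_of_injective hker).isClosedMap) _ hclosedset

lemma isClosed_coneGen {r : ℕ} (s : Finset (Vr r)) : IsClosed (coneGen s) := by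
  classical
  have hun : coneGen s = ⋃ u ∈ {u : Finset (Vr r) | u ⊆ s ∧
      LinearIndependent ℝ (fun i : ↥u => (i : Vr r))}, coneGen u := by
    apply Set.Subset.antisymm
    · rintro x ⟨c, hc, rfl⟩
      obtain ⟨u, h1, h2, h3⟩ := coneGen_cara s.card s c le_rfl hc
      exact Set.mem_biUnion (⟨h1, h2⟩ : _ ∧ _) h3
    · intro x hx
      obtain ⟨u, hu, hxu⟩ := Set.mem_iUnion₂.mp hx
      exact coneGen_mono hu.1 hxu
  rw [hun]
  refine Set.Finite.isClosed_biUnion ?_ fun u hu => isClosed_coneGen_li u hu.2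
  exact s.powerset.finite_toSet.subset fun u hu => Finset.mem_coe.mpr (Finset.mem_powerset.mpr hu.1)

lemma avoid_lemma (C : Set M) (h0 : (0 : M) ∈ C)
    (hC : ∀ a ∈ C, ∀ b ∈ C, ∀ t : ℝ, 0 ≤ t → a + t • b ∈ C)
    (G : Finset (M →ₗ[ℝ] ℝ)) (hG : ∀ g ∈ G, ∃ x ∈ C, g x ≠ 0) :
    ∃ u ∈ C, ∀ g ∈ G, g u ≠ 0 := by
  classical
  induction G using Finset.cons_induction with
  | empty => exact ⟨0, h0, by simp⟩
  | cons g G' hg ih =>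
    obtain ⟨u, huC, hu⟩ := ih (fun g' h => hG g' (Finset.mem_cons_of_mem h))
    obtain ⟨x, hxC, hgx⟩ := hG g (Finset.mem_cons_self _ _)
    set bad : Finset ℝ :=
      (Finset.cons g G' hg).image (fun g' => if g' x = 0 then 0 else -(g' u) / (g' x)) with hbad
    obtain ⟨t, ht, htbad⟩ := (Set.Ioi_infinite (0 : ℝ)).exists_notMem_finset bad
    have ht0 : (0 : ℝ) < t := ht
    refine ⟨u + t • x, hC u huC x hxC t ht0.le, ?_⟩
    intro g' hg'
    rw [map_add, map_smul, smul_eq_mul]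
    intro hzero
    by_cases hgx' : g' x = 0
    · rw [hgx', mul_zero, add_zero] at hzero
      rcases Finset.mem_cons.mp hg' with rfl | hmem
      · exact hgx hgx'
      · exact hu g' hmem hzero
    · apply htbad
      rw [hbad]
      refine Finset.mem_image.mpr ⟨g', hg', ?_⟩
      rw [if_neg hgx']
      field_simp
      linarith [hzero]

lemma subset_hyp_of_subset_iUnion (C : Set M) (h0 : (0 : M) ∈ C)
    (hC : ∀ a ∈ C, ∀ b ∈ C, ∀ t : ℝ, 0 ≤ t → a + t • b ∈ C)
    {n : ℕ} (H : Fin n → Set M) (hH : ∀ i, IsHyp (H i))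
    (hsub : C ⊆ ⋃ i, H i) : ∃ i, C ⊆ H i := by
  classical
  by_contra hcon
  push_neg at hcon
  choose f hf0 hfH using hH
  set G : Finset (M →ₗ[ℝ] ℝ) := Finset.univ.image f with hG
  have hGprop : ∀ g ∈ G, ∃ x ∈ C, g x ≠ 0 := by
    intro g hgm
    obtain ⟨i, _, rfl⟩ := Finset.mem_image.mp hgm
    obtain ⟨x, hxC, hxn⟩ := Set.not_subset.mp (hcon i)
    refine ⟨x, hxC, fun hzero => hxn ?_⟩
    rw [hfH i]
    exact hzero
  obtain ⟨u, huC, hu⟩ := avoid_lemma C h0 hC G hGprop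
  obtain ⟨i, hi⟩ := Set.mem_iUnion.mp (hsub huC)
  refine hu (f i) (Finset.mem_image_of_mem f (Finset.mem_univ i)) ?_
  rw [hfH i] at hi
  exact hi

lemma ker_finrank {r : ℕ} (g : Vr r →ₗ[ℝ] ℝ) (hg : g ≠ 0) :
    Module.finrank ℝ (LinearMap.ker g) = r - 1 := by
  obtain ⟨x, hx⟩ : ∃ x, g x ≠ 0 := by
    by_contra hcon
    push_neg at hcon
    exact hg (LinearMap.ext fun w => by rw [hcon w]; rfl)
  have hrange : LinearMap.range g = ⊤ := by
    rw [Submodule.eq_top_iff']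
    intro z
    exact ⟨(z * (g x)⁻¹) • x, by rw [map_smul, smul_eq_mul]; field_simp⟩
  have h := g.finrank_range_add_finrank_ker
  rw [hrange, finrank_top] at h
  have h1 : Module.finrank ℝ ℝ = 1 := Module.finrank_self ℝ
  have h2 : Module.finrank ℝ (Vr r) = r := by
    rw [Module.finrank_pi]
    simp
  rw [h1, h2] at h
  omega

lemma span_eq_ker {r : ℕ} {τ : Set (Vr r)} {g : Vr r →ₗ[ℝ] ℝ} (hg : g ≠ 0)
    (hsub : τ ⊆ {x | g x = 0}) (hdim : spanDim τ = r - 1) :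
    Submodule.span ℝ τ = LinearMap.ker g := by
  have hle : Submodule.span ℝ τ ≤ LinearMap.ker g :=
    Submodule.span_le.mpr fun x hx => LinearMap.mem_ker.mpr (hsub hx)
  exact Submodule.eq_of_le_of_finrank_eq hle (by rw [ker_finrank g hg]; exact hdim)

lemma signLem {r n : ℕ} {N : AddSubgroup (Vr r)} {F : Set (Set (Vr r))}
    (hfan : IsFan N F) (H : Fin n → Set (Vr r)) (hH : ∀ i, IsHyp (H i))
    (hsupp : ⋃₀ {τ' ∈ F | spanDim τ' = r - 1} = ⋃ i, H i)
    (f : Vr r →ₗ[ℝ] ℝ) (hf : f ≠ 0)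
    (hker : {x | f x = 0} ⊆ ⋃₀ {τ' ∈ F | spanDim τ' = r - 1}) :
    ∀ σ ∈ F, (∀ x ∈ σ, 0 ≤ f x) ∨ (∀ x ∈ σ, f x ≤ 0) := by
  classical
  have hcomb : ∀ σ ∈ F, ∀ a ∈ σ, ∀ b ∈ σ, ∀ p q : ℝ, 0 ≤ p → 0 ≤ q → p • a + q • b ∈ σ := by
    intro σ hσ a ha b hb p q hp hq
    obtain ⟨s, -, hs, -⟩ := hfan.cones σ hσ
    rw [hs] at ha hb ⊢
    exact coneGen_combo ha hb hp hq
  have hzero : ∀ σ ∈ F, (0 : Vr r) ∈ σ := by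
    intro σ hσ
    obtain ⟨s, -, hs, -⟩ := hfan.cones σ hσ
    rw [hs]
    exact coneGen_zero_mem s
  by_contra hcon
  push_neg at hcon
  obtain ⟨σ, hσF, ⟨y', hy'σ, hy'⟩, ⟨x', hx'σ, hx'⟩⟩ := hcon
  set C : Set (Set (Vr r)) := {δ | δ ∈ F ∧ (∃ x ∈ δ, 0 < f x) ∧ (∃ y ∈ δ, f y < 0)} with hCdef
  have hCfin : C.Finite := hfan.finite.subset fun δ hδ => hδ.1
  obtain ⟨δ, hδC, hδmin'⟩ := Set.Finite.exists_minimalFor id C hCfin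
    ⟨σ, hσF, ⟨x', hx'σ, hx'⟩, ⟨y', hy'σ, hy'⟩⟩
  have hδmin : ∀ a' ∈ C, id a' ≤ id δ → id δ = id a' :=
    fun a' ha' hle => le_antisymm (hδmin' ha' hle) hle
  obtain ⟨hδF, ⟨x, hxδ, hfx⟩, ⟨y, hyδ, hfy⟩⟩ := hδC
  set z : Vr r := (f x) • y + (-(f y)) • x with hz
  have hfz : f z = 0 := by
    rw [hz, map_add, map_smul, map_smul, smul_eq_mul, smul_eq_mul]
    ring
  have hzδ : z ∈ δ := hcomb δ hδF y hyδ x hxδ _ _ hfx.le (by linarith)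
  have key : ∀ τ' ∈ F, z ∈ τ' → δ ⊆ τ' := by
    intro τ' hτ'F hzτ'
    obtain ⟨m, hm, hmeq⟩ := (hfan.inter δ hδF τ' hτ'F).1
    have hmz : m z = 0 := by
      have hmem : z ∈ δ ∩ τ' := ⟨hzδ, hzτ'⟩
      rw [hmeq] at hmem
      exact hmem.2
    have hmzval : m z = f x * m y + (-(f y)) * m x := by
      rw [hz, map_add, map_smul, map_smul, smul_eq_mul, smul_eq_mul]
    have hmx0 : m x = 0 := by nlinarith [hm x hxδ, hm y hyδ]
    have hmy0 : m y = 0 := by nlinarith [hm x hxδ, hm y hyδ]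
    have hxmem : x ∈ δ ∩ τ' := by rw [hmeq]; exact ⟨hxδ, hmx0⟩
    have hymem : y ∈ δ ∩ τ' := by rw [hmeq]; exact ⟨hyδ, hmy0⟩
    have hmemF : δ ∩ τ' ∈ F := hfan.faces δ hδF _ (hfan.inter δ hδF τ' hτ'F).1
    have hmemC : δ ∩ τ' ∈ C := ⟨hmemF, ⟨x, hxmem, hfx⟩, ⟨y, hymem, hfy⟩⟩
    have heq : δ = δ ∩ τ' := hδmin (δ ∩ τ') hmemC Set.inter_subset_left
    exact fun w hw => (heq ▸ hw).2
  have hgex : ∀ τ' ∈ F, spanDim τ' = r - 1 → ∃ g : Vr r →ₗ[ℝ] ℝ, g ≠ 0 ∧ τ' ⊆ {w | g w = 0} := by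
    intro τ' hτ'F hdim
    have hsub : τ' ⊆ ⋃ i, H i := by
      rw [← hsupp]
      exact Set.subset_sUnion_of_mem ⟨hτ'F, hdim⟩
    obtain ⟨i, hi⟩ := subset_hyp_of_subset_iUnion τ' (hzero τ' hτ'F)
      (fun a ha b hb t ht => by simpa using hcomb τ' hτ'F a ha b hb 1 t zero_le_one ht) H hH hsub
    obtain ⟨g, hg0, hgeq⟩ := hH i
    exact ⟨g, hg0, hgeq ▸ hi⟩
  set T : Set (Set (Vr r)) := {τ' | τ' ∈ F ∧ spanDim τ' = r - 1 ∧ z ∈ τ'} with hTdef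
  have hTfin : T.Finite := hfan.finite.subset fun τ' h => h.1
  have hgex' : ∀ τ' : Set (Vr r), ∃ g : Vr r →ₗ[ℝ] ℝ, τ' ∈ T → g ≠ 0 ∧ τ' ⊆ {w | g w = 0} := by
    intro τ'
    by_cases h : τ' ∈ T
    · obtain ⟨g, h1, h2⟩ := hgex τ' h.1 h.2.1
      exact ⟨g, fun _ => ⟨h1, h2⟩⟩
    · exact ⟨0, fun hc => absurd hc h⟩
  choose gof hgof using hgex'
  set G : Finset (Vr r →ₗ[ℝ] ℝ) := hTfin.toFinset.image gof with hGdef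
  have hkf : Module.finrank ℝ (LinearMap.ker f) = r - 1 := ker_finrank f hf
  have hGprop : ∀ g ∈ G, ∃ w ∈ {w : Vr r | f w = 0}, g w ≠ 0 := by
    intro g hgm
    obtain ⟨τ', hτ'm, rfl⟩ := Finset.mem_image.mp hgm
    rw [Set.Finite.mem_toFinset] at hτ'm
    obtain ⟨hgne, hgsub⟩ := hgof τ' hτ'm
    by_contra hcon2
    push_neg at hcon2
    have hle : LinearMap.ker f ≤ LinearMap.ker (gof τ') := by
      intro w hw
      rw [LinearMap.mem_ker] at hw ⊢
      exact hcon2 w hw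
    have hkeq : LinearMap.ker f = LinearMap.ker (gof τ') :=
      Submodule.eq_of_le_of_finrank_eq hle (by rw [hkf, ker_finrank _ hgne])
    have hxτ' : x ∈ τ' := key τ' hτ'm.1 hτ'm.2.2 hxδ
    have hfx0 : f x = 0 := by
      have hxk : x ∈ LinearMap.ker (gof τ') := LinearMap.mem_ker.mpr (hgsub hxτ')
      rw [← hkeq] at hxk
      exact LinearMap.mem_ker.mp hxk
    linarith
  have hCset : ∀ a ∈ {w : Vr r | f w = 0}, ∀ b ∈ {w : Vr r | f w = 0}, ∀ t : ℝ,
      0 ≤ t → a + t • b ∈ {w : Vr r | f w = 0} := by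
    intro a ha b hb t _
    simp only [Set.mem_setOf_eq] at ha hb ⊢
    rw [map_add, map_smul, ha, hb, smul_zero, add_zero]
  obtain ⟨u, huf, hu⟩ := avoid_lemma {w : Vr r | f w = 0} (by simp) hCset G hGprop
  have hfu : f u = 0 := huf
  set T1 : Set (Set (Vr r)) := {τ' ∈ F | spanDim τ' = r - 1} with hT1def
  have hT1fin : T1.Finite := hfan.finite.subset fun τ' h => h.1
  have hseq : ∀ k : ℕ, ∃ t : ↥(hT1fin.toFinset),
      z + (1 / (k + 1) : ℝ) • u ∈ (t : Set (Vr r)) := by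
    intro k
    have hmem : z + (1 / (k + 1) : ℝ) • u ∈ {w : Vr r | f w = 0} := by
      simp only [Set.mem_setOf_eq, map_add, map_smul, hfz, hfu, smul_zero, add_zero]
    obtain ⟨τ', hτ'T1, hmem2⟩ := hker hmem
    exact ⟨⟨τ', (Set.Finite.mem_toFinset hT1fin).mpr hτ'T1⟩, hmem2⟩
  choose cf hcf using hseq
  obtain ⟨t0, ht0⟩ := Finite.exists_infinite_fiber cf
  have hKinf : (cf ⁻¹' {t0}).Infinite := Set.infinite_coe_iff.mp ht0
  set τs : Set (Vr r) := (t0 : Set (Vr r)) with hτsdef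
  have hτsT1 : τs ∈ T1 := (Set.Finite.mem_toFinset hT1fin).mp t0.2
  have hclosed : IsClosed τs := by
    obtain ⟨s, -, hs, -⟩ := hfan.cones τs hτsT1.1
    rw [hs]
    exact isClosed_coneGen s
  have hzτs : z ∈ τs := by
    rw [← hclosed.closure_eq]
    rw [Metric.mem_closure_iff]
    intro ε hε
    obtain ⟨Nn, hNn⟩ := exists_nat_gt (‖u‖ / ε)
    obtain ⟨k, hkK, hkN⟩ := hKinf.exists_gt Nn
    have hck : cf k = t0 := hkK
    refine ⟨z + (1 / (k + 1) : ℝ) • u, ?_, ?_⟩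
    · have h2 := hcf k
      rw [hck] at h2
      exact h2
    · have hk1 : (0 : ℝ) < (k : ℝ) + 1 := by positivity
      rw [dist_eq_norm]
      have : z - (z + (1 / (k + 1) : ℝ) • u) = -((1 / (k + 1) : ℝ) • u) := by abel
      rw [this, norm_neg, norm_smul, Real.norm_eq_abs, abs_of_pos (by positivity)]
      have hNn' : ‖u‖ < Nn * ε := by
        rw [div_lt_iff₀ hε] at hNn
        linarith
      have hcast : (Nn : ℝ) < (k : ℝ) + 1 := by
        have : (Nn : ℝ) < (k : ℝ) := by exact_mod_cast hkN
        linarith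
      rw [div_mul_eq_mul_div, one_mul, div_lt_iff₀ hk1]
      nlinarith [norm_nonneg u]
  have hτsT : τs ∈ T := ⟨hτsT1.1, hτsT1.2, hzτs⟩
  obtain ⟨hgne, hgsub⟩ := hgof τs hτsT
  have hgmem : gof τs ∈ G := Finset.mem_image_of_mem gof ((Set.Finite.mem_toFinset hTfin).mpr hτsT)
  obtain ⟨k, hkK⟩ := hKinf.nonempty
  have hck : cf k = t0 := hkK
  have hpk : z + (1 / (k + 1) : ℝ) • u ∈ τs := by
    have h2 := hcf k
    rw [hck] at h2
    exact h2
  have h1 : gof τs (z + (1 / (k + 1) : ℝ) • u) = 0 := hgsub hpk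
  have h2 : gof τs z = 0 := hgsub hzτs
  have h3 : gof τs u ≠ 0 := hu _ hgmem
  rw [map_add, map_smul, h2, smul_eq_mul, zero_add] at h1
  have hne : (1 / (k + 1) : ℝ) ≠ 0 := by positivity
  rcases mul_eq_zero.mp h1 with h | h
  · exact hne h
  · exact h3 h

end AuxProofs

/-- in a strongly symmetric (complete) fan, `σ ∩ span τ` is a face of `σ`,
hence an element of the fan, for all `τ ∈ Σ(r-1)`, `σ ∈ Σ`. -/
theorem stmt3 {r n : ℕ} (N : AddSubgroup (Vr r)) (F : Set (Set (Vr r)))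
    (hN : IsLattice N) (hfan : IsFan N F) (hcomp : FanComplete F)
    (H : Fin n → Set (Vr r)) (hH : ∀ i, IsHyp (H i))
    (hsupp : ⋃₀ {τ ∈ F | spanDim τ = r - 1} = ⋃ i, H i) :
    ∀ τ ∈ F, spanDim τ = r - 1 → ∀ σ ∈ F,
      IsFaceOf (σ ∩ ↑(Submodule.span ℝ τ)) σ ∧ σ ∩ ↑(Submodule.span ℝ τ) ∈ F := by
  intro τ hτF hdim σ hσF
  obtain ⟨sτ, -, hτeq, -⟩ := hfan.cones τ hτF
  have h0τ : (0 : Vr r) ∈ τ := by rw [hτeq]; exact coneGen_zero_mem sτ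
  have hcombτ : ∀ a ∈ τ, ∀ b ∈ τ, ∀ t : ℝ, 0 ≤ t → a + t • b ∈ τ := by
    intro a ha b hb t ht
    rw [hτeq] at ha hb ⊢
    simpa using coneGen_combo ha hb zero_le_one ht
  have hτsub : τ ⊆ ⋃ i, H i := by
    rw [← hsupp]
    exact Set.subset_sUnion_of_mem ⟨hτF, hdim⟩
  obtain ⟨i, hi⟩ := subset_hyp_of_subset_iUnion τ h0τ hcombτ H hH hτsub
  obtain ⟨g, hgne, hgeq⟩ := hH i
  have hgsub : τ ⊆ {x | g x = 0} := hgeq ▸ hi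
  have hspan : Submodule.span ℝ τ = LinearMap.ker g := span_eq_ker hgne hgsub hdim
  have hset : (↑(Submodule.span ℝ τ) : Set (Vr r)) = {x | g x = 0} := by
    rw [hspan]
    ext w
    simp [LinearMap.mem_ker]
  have hkersub : {x | g x = 0} ⊆ ⋃₀ {τ' ∈ F | spanDim τ' = r - 1} := by
    rw [hsupp, ← hgeq]
    exact Set.subset_iUnion H i
  have hsign := signLem hfan H hH hsupp g hgne hkersub σ hσF
  have hface : IsFaceOf (σ ∩ ↑(Submodule.span ℝ τ)) σ := by
    rcases hsign with h | h
    · exact ⟨g, h, by rw [hset]⟩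
    · refine ⟨-g, fun w hw => ?_, ?_⟩
      · simpa using h w hw
      · rw [hset]
        ext w
        simp [neg_eq_zero]
  exact ⟨hface, hfan.faces σ hσF _ hface⟩
end

section
/- Let Σ be a strongly symmetric fan of dimension r in ℝ^r, and let A(Σ) be the set of hyperplanes H_1,…,H_n whose union is the support of Σ(r-1). Then Σ equals the set of all intersections of closed chambers of the hyperplane arrangement A(Σ). In particular, Σ is centrally symmetric: Σ = −Σ. -/
open scoped Classical Pointwise BigOperators

namespace Stmt4Aux

open Set Metric MeasureTheory Module Filter Topology

variable {r : ℕ}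

/-! ### Basic facts about `coneGen` -/

theorem zero_mem_coneGen (s : Finset (Vr r)) : (0 : Vr r) ∈ coneGen s :=
  ⟨0, fun _ => le_rfl, by simp⟩

theorem mem_coneGen_of_mem {s : Finset (Vr r)} {v : Vr r} (hv : v ∈ s) : v ∈ coneGen s := by
  classical
  refine ⟨fun w => if w = v then 1 else 0, fun w => by dsimp only; split <;> norm_num, ?_⟩
  have h : ∀ w ∈ s, (if w = v then (1 : ℝ) else 0) • w = if w = v then w else 0 := by
    intro w _; split <;> simp
  rw [Finset.sum_congr rfl h, Finset.sum_ite_eq' s v (fun w => w), if_pos hv]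

theorem coneGen_mono {s t : Finset (Vr r)} (h : s ⊆ t) : coneGen s ⊆ coneGen t := by
  classical
  rintro x ⟨c, hc, rfl⟩
  refine ⟨fun v => if v ∈ s then c v else 0,
    fun v => by dsimp only; split
                · exact hc v
                · exact le_rfl, ?_⟩
  rw [← Finset.sum_subset h (fun v _ hvs => by dsimp only; rw [if_neg hvs, zero_smul])]
  exact Finset.sum_congr rfl fun v hv => by dsimp only; rw [if_pos hv]

theorem coneGen_convex (s : Finset (Vr r)) : Convex ℝ (coneGen s) := by
  rintro x ⟨c, hc, rfl⟩ y ⟨d, hd, rfl⟩ a b ha hb hab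
  refine ⟨fun v => a * c v + b * d v, fun v => add_nonneg (mul_nonneg ha (hc v)) (mul_nonneg hb (hd v)), ?_⟩
  rw [Finset.smul_sum, Finset.smul_sum, ← Finset.sum_add_distrib]
  exact Finset.sum_congr rfl fun v _ => by
    rw [add_smul, smul_smul, smul_smul]

theorem coneGen_subset_span (s : Finset (Vr r)) :
    coneGen s ⊆ (Submodule.span ℝ (s : Set (Vr r)) : Set (Vr r)) := by
  rintro x ⟨c, hc, rfl⟩
  exact Submodule.sum_mem _ fun v hv => Submodule.smul_mem _ _ (Submodule.subset_span hv)

theorem span_coneGen (s : Finset (Vr r)) :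
    Submodule.span ℝ (coneGen s) = Submodule.span ℝ (s : Set (Vr r)) := by
  apply le_antisymm
  · rw [Submodule.span_le]; exact coneGen_subset_span s
  · exact Submodule.span_mono (fun v hv => mem_coneGen_of_mem hv)

/-! ### Carathéodory for cones, and closedness -/

theorem coneGen_caratheodory_aux :
    ∀ n (s : Finset (Vr r)), s.card ≤ n → ∀ x ∈ coneGen s,
      ∃ t, t ⊆ s ∧ (LinearIndependent ℝ (fun i : {y // y ∈ t} => (i : Vr r))) ∧ x ∈ coneGen t := by
  classical
  intro n
  induction n with
  | zero =>
      intro s hs x hx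
      have hse : s = ∅ := Finset.card_eq_zero.mp (le_antisymm hs (Nat.zero_le _))
      subst hse
      have hemp : IsEmpty {y // y ∈ (∅ : Finset (Vr r))} := by
        constructor; rintro ⟨y, hy⟩; exact absurd hy (Finset.notMem_empty y)
      exact ⟨∅, subset_rfl, linearIndependent_empty_type, hx⟩
  | succ n ih =>
      intro s hcard x hx
      by_cases hli : LinearIndependent ℝ (fun i : {y // y ∈ s} => (i : Vr r))
      · exact ⟨s, subset_rfl, hli, hx⟩
      obtain ⟨c, hc, hxc⟩ := hx
      obtain ⟨g, hgsum, i₀, hgi₀⟩ := Fintype.not_linearIndependent_iff.mp hli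
      set d : Vr r → ℝ := fun v => if h : v ∈ s then g ⟨v, h⟩ else 0 with hd
      have hdsum : ∑ v ∈ s, d v • v = 0 := by
        rw [← Finset.sum_coe_sort s (fun v => d v • v)]
        have h : ∀ i : {y // y ∈ s}, d (i : Vr r) • (i : Vr r) = g i • (i : Vr r) := by
          intro i; rw [hd]; dsimp only; rw [dif_pos i.2]
        simp only [h]; exact hgsum
      have hdi₀ : d (i₀ : Vr r) ≠ 0 := by
        rw [hd]; dsimp only; rw [dif_pos i₀.2]; exact hgi₀
      obtain ⟨e, hesum, v₀, hv₀s, hv₀pos⟩ :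
          ∃ e : Vr r → ℝ, ∑ v ∈ s, e v • v = 0 ∧ ∃ v₀ ∈ s, 0 < e v₀ := by
        rcases lt_or_gt_of_ne hdi₀ with hneg | hpos
        · refine ⟨fun w => -d w, ?_, i₀, i₀.2, by simpa using hneg⟩
          simp only [neg_smul, Finset.sum_neg_distrib, hdsum, neg_zero]
        · exact ⟨d, hdsum, i₀, i₀.2, hpos⟩
      set pos := s.filter (fun v => 0 < e v) with hposdef
      have hposne : pos.Nonempty := ⟨v₀, Finset.mem_filter.mpr ⟨hv₀s, hv₀pos⟩⟩
      set lam := pos.inf' hposne (fun v => c v / e v) with hlamdef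
      have hlam0 : 0 ≤ lam :=
        Finset.le_inf' hposne _ fun v hv =>
          div_nonneg (hc v) (le_of_lt (Finset.mem_filter.mp hv).2)
      obtain ⟨vm, hvmpos, hvmeq⟩ := Finset.exists_mem_eq_inf' hposne (fun v => c v / e v)
      have hvm_s : vm ∈ s := (Finset.mem_filter.mp hvmpos).1
      have hvm_e : 0 < e vm := (Finset.mem_filter.mp hvmpos).2
      set c' : Vr r → ℝ := fun v => if v ∈ s then c v - lam * e v else 0 with hc'def
      have hc'0 : ∀ v, 0 ≤ c' v := by
        intro v
        rw [hc'def]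
        dsimp only
        by_cases hvs : v ∈ s
        · rw [if_pos hvs]
          by_cases hev : 0 < e v
          · have hle : lam ≤ c v / e v :=
              Finset.inf'_le _ (Finset.mem_filter.mpr ⟨hvs, hev⟩)
            rw [sub_nonneg]
            exact (le_div_iff₀ hev).mp hle
          · push_neg at hev
            have := mul_nonpos_of_nonneg_of_nonpos hlam0 hev
            nlinarith [hc v]
        · rw [if_neg hvs]
      have hxsum : ∑ v ∈ s, c v • v = ∑ v ∈ s, c' v • v := by
        have h1 : ∑ v ∈ s, c' v • v = ∑ v ∈ s, (c v • v - (lam * e v) • v) :=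
          Finset.sum_congr rfl fun v hv => by rw [hc'def]; dsimp only; rw [if_pos hv, sub_smul]
        have h2 : ∑ v ∈ s, (lam * e v) • v = lam • ∑ v ∈ s, e v • v := by
          rw [Finset.smul_sum]
          exact Finset.sum_congr rfl fun v _ => (smul_smul lam (e v) v).symm
        rw [h1, Finset.sum_sub_distrib, h2, hesum, smul_zero, sub_zero]
      have hcvm : c' vm = 0 := by
        rw [hc'def]
        dsimp only
        rw [if_pos hvm_s]
        rw [show lam = c vm / e vm from hvmeq]
        rw [div_mul_cancel₀ _ hvm_e.ne', sub_self]
      have hxe : x ∈ coneGen (s.erase vm) := by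
        refine ⟨c', hc'0, ?_⟩
        rw [hxc, hxsum, ← Finset.sum_erase s (by rw [hcvm, zero_smul])]
      have hcard' : (s.erase vm).card ≤ n := by
        rw [Finset.card_erase_of_mem hvm_s]; omega
      obtain ⟨t, hts, hli', hxt⟩ := ih (s.erase vm) hcard' x hxe
      exact ⟨t, hts.trans (Finset.erase_subset _ _), hli', hxt⟩

theorem coneGen_caratheodory (s : Finset (Vr r)) {x : Vr r} (hx : x ∈ coneGen s) :
    ∃ t, t ⊆ s ∧ (LinearIndependent ℝ (fun i : {y // y ∈ t} => (i : Vr r))) ∧ x ∈ coneGen t :=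
  coneGen_caratheodory_aux s.card s le_rfl x hx

theorem isClosed_coneGen_of_li (t : Finset (Vr r))
    (h : LinearIndependent ℝ (fun i : {y // y ∈ t} => (i : Vr r))) :
    IsClosed (coneGen t) := by
  classical
  set φ : ({y // y ∈ t} → ℝ) →ₗ[ℝ] Vr r :=
    { toFun := fun g => ∑ i, g i • (i : Vr r)
      map_add' := by
        intro a b; simp only [Pi.add_apply, add_smul, Finset.sum_add_distrib]
      map_smul' := by
        intro m a; simp only [Pi.smul_apply, smul_eq_mul, RingHom.id_apply, Finset.smul_sum,
          smul_smul] } with hφ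
  have hker : LinearMap.ker φ = ⊥ := by
    rw [LinearMap.ker_eq_bot']
    intro g hg
    have hz := Fintype.linearIndependent_iff.mp h g hg
    funext i; exact hz i
  have hemb := LinearMap.isClosedEmbedding_of_injective (f := φ) hker
  have himg : coneGen t = φ '' {g | ∀ i, 0 ≤ g i} := by
    ext x
    constructor
    · rintro ⟨c, hc, rfl⟩
      refine ⟨fun i => c (i : Vr r), fun i => hc _, ?_⟩
      show ∑ i : {y // y ∈ t}, c (i : Vr r) • (i : Vr r) = _
      rw [Finset.sum_coe_sort t (fun v => c v • v)]
    · rintro ⟨g, hg, rfl⟩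
      refine ⟨fun v => if h : v ∈ t then g ⟨v, h⟩ else 0, ?_, ?_⟩
      · intro v
        by_cases hv : v ∈ t
        · simp only [dif_pos hv]; exact hg _
        · simp only [dif_neg hv]; exact le_rfl
      · show φ g = _
        rw [← Finset.sum_coe_sort t
          (fun v => (if h : v ∈ t then g ⟨v, h⟩ else 0) • v)]
        show ∑ i : {y // y ∈ t}, g i • (i : Vr r) = _
        exact Finset.sum_congr rfl fun i _ => by rw [dif_pos i.2]
  have hcl : IsClosed {g : {y // y ∈ t} → ℝ | ∀ i, 0 ≤ g i} := by
    have he : {g : {y // y ∈ t} → ℝ | ∀ i, 0 ≤ g i} = ⋂ i, {g | 0 ≤ g i} := by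
      ext g; simp
    rw [he]
    exact isClosed_iInter fun i => isClosed_le continuous_const (continuous_apply i)
  rw [himg]
  exact hemb.isClosedMap _ hcl

theorem isClosed_coneGen (s : Finset (Vr r)) : IsClosed (coneGen s) := by
  classical
  have hdecomp : coneGen s =
      ⋃ t ∈ {t : Finset (Vr r) | t ⊆ s ∧
        LinearIndependent ℝ (fun i : {y // y ∈ t} => (i : Vr r))}, coneGen t := by
    ext x
    simp only [mem_iUnion, mem_setOf_eq, exists_prop]
    constructor
    · intro hx
      obtain ⟨t, hts, hli, hxt⟩ := coneGen_caratheodory s hx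
      exact ⟨t, ⟨hts, hli⟩, hxt⟩
    · rintro ⟨t, ⟨hts, -⟩, hxt⟩
      exact coneGen_mono hts hxt
  rw [hdecomp]
  apply Set.Finite.isClosed_biUnion
  · apply Set.Finite.subset (s.powerset : Finset (Finset (Vr r))).finite_toSet
    intro t ht
    simpa [Finset.mem_powerset] using ht.1
  · intro t ht
    exact isClosed_coneGen_of_li t ht.2

/-! ### Dimension and measure facts -/

theorem finrank_Vr : finrank ℝ (Vr r) = r := by
  simp [finrank_fintype_fun_eq_card]

theorem null_submodule (W : Submodule ℝ (Vr r)) (hW : W ≠ ⊤) :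
    volume (W : Set (Vr r)) = 0 :=
  MeasureTheory.Measure.addHaar_submodule volume W hW

theorem spanDim_le (σ : Set (Vr r)) : spanDim σ ≤ r := by
  have h := Submodule.finrank_le (Submodule.span ℝ σ)
  rw [finrank_Vr] at h
  exact h

theorem ne_top_of_finrank_lt {W : Submodule ℝ (Vr r)} (h : finrank ℝ W < r) : W ≠ ⊤ := by
  intro htop
  rw [htop, finrank_top, finrank_Vr] at h
  omega

theorem span_ne_top_of_small {σ : Set (Vr r)} (hd : spanDim σ ≠ r) :
    Submodule.span ℝ σ ≠ ⊤ := by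
  have hle := spanDim_le σ
  exact ne_top_of_finrank_lt (by unfold spanDim at hd hle; omega)

theorem null_small {σ : Set (Vr r)} (hd : spanDim σ ≠ r) : volume σ = 0 :=
  measure_mono_null Submodule.subset_span (null_submodule _ (span_ne_top_of_small hd))

theorem interior_empty_of_small {σ : Set (Vr r)} (hd : spanDim σ ≠ r) : interior σ = ∅ := by
  by_contra h
  have hne : (interior σ).Nonempty := nonempty_iff_ne_empty.mpr h
  have hpos := isOpen_interior.measure_pos volume hne
  exact absurd (measure_mono_null interior_subset (null_small hd)) hpos.ne'

theorem span_eq_top_of_full {σ : Set (Vr r)} (hd : spanDim σ = r) :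
    Submodule.span ℝ σ = ⊤ :=
  Submodule.eq_top_of_finrank_eq (by rw [finrank_Vr]; exact hd)

theorem interior_coneGen_nonempty {s : Finset (Vr r)}
    (h : Submodule.span ℝ (coneGen s) = ⊤) : (interior (coneGen s)).Nonempty := by
  rw [(coneGen_convex s).interior_nonempty_iff_affineSpan_eq_top]
  rw [AffineSubspace.affineSpan_eq_top_iff_vectorSpan_eq_top_of_nonempty ℝ (Vr r) (Vr r)
    ⟨0, zero_mem_coneGen s⟩]
  rw [← top_le_iff, ← h]
  apply Submodule.span_le.mpr
  intro v hv
  have hvv := vsub_mem_vectorSpan ℝ hv (zero_mem_coneGen s)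
  simpa using hvv

/-! ### Fan-level basic lemmas -/

variable {N : AddSubgroup (Vr r)} {F : Set (Set (Vr r))} {A : Finset (Set (Vr r))}

theorem cone_closed (hfan : IsFan N F) {σ : Set (Vr r)} (hσ : σ ∈ F) : IsClosed σ := by
  obtain ⟨s, -, heq, -⟩ := hfan.cones σ hσ
  rw [heq]; exact isClosed_coneGen s

theorem cone_convex (hfan : IsFan N F) {σ : Set (Vr r)} (hσ : σ ∈ F) : Convex ℝ σ := by
  obtain ⟨s, -, heq, -⟩ := hfan.cones σ hσ
  rw [heq]; exact coneGen_convex s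

theorem cone_zero_mem (hfan : IsFan N F) {σ : Set (Vr r)} (hσ : σ ∈ F) : (0 : Vr r) ∈ σ := by
  obtain ⟨s, -, heq, -⟩ := hfan.cones σ hσ
  rw [heq]; exact zero_mem_coneGen s

theorem complete_mem (hcomp : FanComplete F) (z : Vr r) : ∃ σ ∈ F, z ∈ σ := by
  have hz : z ∈ ⋃₀ F := by rw [hcomp]; trivial
  exact mem_sUnion.mp hz

theorem full_interior (hfan : IsFan N F) {σ : Set (Vr r)} (hσ : σ ∈ F)
    (hd : spanDim σ = r) : (interior σ).Nonempty := by
  obtain ⟨s, -, heq, -⟩ := hfan.cones σ hσ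
  subst heq
  apply interior_coneGen_nonempty
  exact span_eq_top_of_full hd

theorem linearMap_eq_zero_of_nonneg_ball {m : Vr r →ₗ[ℝ] ℝ} {z : Vr r} {ε : ℝ} (hε : 0 < ε)
    (h : ∀ w ∈ ball z ε, 0 ≤ m w) (hz : m z = 0) : ∀ v, m v = 0 := by
  intro v
  set t := ε / (2 * (‖v‖ + 1)) with ht
  have ht0 : 0 < t := by positivity
  have hmem : ∀ u : Vr r, ‖u‖ = ‖v‖ → z + t • u ∈ ball z ε := by
    intro u hu
    rw [mem_ball, dist_eq_norm, add_sub_cancel_left, norm_smul, Real.norm_eq_abs,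
      abs_of_pos ht0, hu, ht]
    rw [div_mul_eq_mul_div, div_lt_iff₀ (by positivity)]
    nlinarith [norm_nonneg v]
  have h1 := h _ (hmem v rfl)
  have h2 := h _ (hmem (-v) (norm_neg v))
  rw [map_add, LinearMap.map_smul, hz, zero_add, smul_eq_mul] at h1
  rw [map_add, LinearMap.map_smul, hz, zero_add, map_neg, smul_eq_mul] at h2
  nlinarith

theorem eq_of_mem_interior (hfan : IsFan N F) {σ τ : Set (Vr r)} (hσ : σ ∈ F) (hτ : τ ∈ F)
    {z : Vr r} (hz : z ∈ interior σ) (hzτ : z ∈ τ) : σ = τ := by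
  obtain ⟨ε, hε, hball⟩ := Metric.mem_nhds_iff.mp (mem_interior_iff_mem_nhds.mp hz)
  -- step 1 : σ ⊆ τ
  obtain ⟨m, hm, heq⟩ := (hfan.inter σ hσ τ hτ).1
  have hzστ : z ∈ σ ∩ τ := ⟨interior_subset hz, hzτ⟩
  have hmz : m z = 0 := by
    rw [heq] at hzστ; exact hzστ.2
  have hm0 : ∀ v, m v = 0 :=
    linearMap_eq_zero_of_nonneg_ball hε (fun w hw => hm w (hball hw)) hmz
  have hsub : σ ⊆ τ := by
    have hst : σ ∩ τ = σ := by
      rw [heq]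
      apply Set.inter_eq_self_of_subset_left
      intro w _; exact hm0 w
    rw [← hst]; exact Set.inter_subset_right
  -- step 2 : σ = τ
  obtain ⟨m', hm', heq'⟩ := (hfan.inter σ hσ τ hτ).2
  rw [Set.inter_eq_self_of_subset_left hsub] at heq'
  have hσker : ∀ w ∈ σ, m' w = 0 := by
    intro w hw
    have : w ∈ τ ∩ {x | m' x = 0} := heq' ▸ hw
    exact this.2
  have hm'0 : ∀ v, m' v = 0 :=
    linearMap_eq_zero_of_nonneg_ball hε (fun w hw => le_of_eq (hσker w (hball hw)).symm)
      (hσker z (interior_subset hz))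
  rw [heq', Set.eq_univ_of_forall (s := {x : Vr r | m' x = 0}) hm'0, Set.inter_univ]

theorem interior_subset_U (hfan : IsFan N F)
    (hsupp : ⋃₀ {τ ∈ F | spanDim τ = r - 1} = ⋃₀ (A : Set (Set (Vr r))))
    (hrpos : 0 < r) {σ : Set (Vr r)} (hσ : σ ∈ F) :
    interior σ ⊆ (⋃₀ (A : Set (Set (Vr r))))ᶜ := by
  intro z hz hzA
  rw [← hsupp] at hzA
  obtain ⟨τ, hτ, hzτ⟩ := hzA
  have heq := eq_of_mem_interior hfan hσ hτ.1 hz hzτ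
  subst heq
  have hne : spanDim σ ≠ r := by have h2 := hτ.2; omega
  rw [interior_empty_of_small hne] at hz
  exact hz


/-! ### Connectivity of a ball minus codim ≥ 2 subspaces -/

theorem preconn_no_partition {D C₁ C₂ : Set (Vr r)} (hD : IsPreconnected D)
    (h1 : IsClosed C₁) (h2 : IsClosed C₂) (hcover : D ⊆ C₁ ∪ C₂)
    (hdisj : ∀ z ∈ D, ¬(z ∈ C₁ ∧ z ∈ C₂))
    (hne1 : (D ∩ C₁).Nonempty) (hne2 : (D ∩ C₂).Nonempty) : False := by
  have hcover' : D ⊆ C₂ᶜ ∪ C₁ᶜ := by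
    intro z hz
    rcases hcover hz with h | h
    · left; intro hc2; exact hdisj z hz ⟨h, hc2⟩
    · right; intro hc1; exact hdisj z hz ⟨hc1, h⟩
  obtain ⟨z1, hz1D, hz1⟩ := hne1
  obtain ⟨z2, hz2D, hz2⟩ := hne2
  obtain ⟨w, hwD, hw2, hw1⟩ :=
    hD C₂ᶜ C₁ᶜ h2.isOpen_compl h1.isOpen_compl hcover'
      ⟨z1, hz1D, fun hc => hdisj z1 hz1D ⟨hz1, hc⟩⟩
      ⟨z2, hz2D, fun hc => hdisj z2 hz2D ⟨hc, hz2⟩⟩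
  rcases hcover hwD with h | h
  · exact hw1 h
  · exact hw2 h

theorem finrank_span_singleton_le (p : Vr r) :
    finrank ℝ (Submodule.span ℝ ({p} : Set (Vr r))) ≤ 1 := by
  rcases eq_or_ne p 0 with rfl | hp
  · rw [Submodule.span_zero_singleton, finrank_bot]
    omega
  · rw [finrank_span_singleton hp]

theorem join_ne_top {W : Submodule ℝ (Vr r)} (hW : finrank ℝ W + 1 < r) (p : Vr r) :
    Submodule.span ℝ (insert p (W : Set (Vr r))) ≠ ⊤ := by
  intro htop
  have h1 : Submodule.span ℝ (insert p (W : Set (Vr r))) =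
      Submodule.span ℝ ({p} : Set (Vr r)) ⊔ W := by
    rw [Submodule.span_insert, Submodule.span_eq]
  rw [h1] at htop
  have h2 := Submodule.finrank_sup_add_finrank_inf_eq
    (Submodule.span ℝ ({p} : Set (Vr r))) W
  have h3 := finrank_span_singleton_le p
  have h5 : finrank ℝ ↥(Submodule.span ℝ ({p} : Set (Vr r)) ⊔ W) = r := by
    rw [htop, finrank_top, finrank_Vr]
  omega

theorem conn_ball_diff (x : Vr r) {ε : ℝ} (hε : 0 < ε) (𝒮 : Set (Submodule ℝ (Vr r)))
    (hfin : 𝒮.Finite) (hdim : ∀ W ∈ 𝒮, finrank ℝ W + 1 < r) :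
    IsPreconnected (ball x ε \ ⋃ W ∈ 𝒮, (W : Set (Vr r))) := by
  classical
  set D := ball x ε \ ⋃ W ∈ 𝒮, (W : Set (Vr r)) with hD
  rcases D.eq_empty_or_nonempty with hDe | ⟨p₀, hp₀⟩
  · rw [hDe]; exact isPreconnected_empty
  have hnull : ∀ (𝒯 : Set (Submodule ℝ (Vr r))), 𝒯.Finite → (∀ W ∈ 𝒯, W ≠ ⊤) →
      volume (⋃ W ∈ 𝒯, (W : Set (Vr r))) = 0 := fun 𝒯 hT hne =>
    (measure_biUnion_null_iff hT.countable).mpr fun W hW => null_submodule W (hne W hW)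
  have hpick : ∀ (M : Set (Vr r)), volume M = 0 → ∃ z ∈ ball x ε, z ∉ M := by
    intro M hM
    by_contra h
    push_neg at h
    exact absurd (measure_mono_null h hM) (measure_ball_pos volume x hε).ne'
  have hjoin : ∀ p ∈ D, ∀ q ∈ D, JoinedIn D p q := by
    intro p hp q hq
    set 𝒯 : Set (Submodule ℝ (Vr r)) :=
      (𝒮 ∪ ((fun W : Submodule ℝ (Vr r) => Submodule.span ℝ (insert p (W : Set (Vr r)))) '' 𝒮))
        ∪ ((fun W : Submodule ℝ (Vr r) => Submodule.span ℝ (insert q (W : Set (Vr r)))) '' 𝒮) with h𝒯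
    have h𝒯fin : 𝒯.Finite := (hfin.union (hfin.image _)).union (hfin.image _)
    have h𝒯ne : ∀ W ∈ 𝒯, W ≠ ⊤ := by
      rintro W ((hW | ⟨W', hW', rfl⟩) | ⟨W', hW', rfl⟩)
      · exact ne_top_of_finrank_lt (by have := hdim W hW; omega)
      · exact join_ne_top (hdim W' hW') p
      · exact join_ne_top (hdim W' hW') q
    obtain ⟨z, hzball, hzM⟩ := hpick _ (hnull 𝒯 h𝒯fin h𝒯ne)
    have h𝒮sub : 𝒮 ⊆ 𝒯 := (Set.subset_union_left).trans (Set.subset_union_left)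
    have hzD : z ∈ D := by
      refine ⟨hzball, fun hmem => hzM ?_⟩
      obtain ⟨W, hW, hzW⟩ := mem_iUnion₂.mp hmem
      exact mem_iUnion₂.mpr ⟨W, h𝒮sub hW, hzW⟩
    have hseg : ∀ p' : Vr r, p' ∈ D →
        (∀ W ∈ 𝒮, z ∉ (Submodule.span ℝ (insert p' (W : Set (Vr r))) : Set (Vr r))) →
        segment ℝ p' z ⊆ D := by
      intro p' hp' hzj w hw
      obtain ⟨a, b, ha, hb, hab, rfl⟩ := hw
      constructor
      · exact convex_ball x ε hp'.1 hzball ha hb hab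
      · intro hmem
        obtain ⟨W, hW, hwW⟩ := mem_iUnion₂.mp hmem
        rcases eq_or_lt_of_le hb with hb0 | hbpos
        · have hb0' : b = 0 := hb0.symm
          have ha1 : a = 1 := by rw [hb0'] at hab; linarith
          have hwp : a • p' + b • z = p' := by rw [hb0', ha1]; simp
          exact hp'.2 (mem_iUnion₂.mpr ⟨W, hW, hwp ▸ hwW⟩)
        · apply hzj W hW
          have hzeq : z = b⁻¹ • ((a • p' + b • z) - a • p') := by
            rw [add_sub_cancel_left, smul_smul, inv_mul_cancel₀ hbpos.ne', one_smul]
          rw [hzeq]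
          apply Submodule.smul_mem
          apply Submodule.sub_mem
          · exact Submodule.subset_span (Set.mem_insert_of_mem _ hwW)
          · exact Submodule.smul_mem _ _ (Submodule.subset_span (Set.mem_insert _ _))
    have hj1 : JoinedIn D p z := by
      have hsub := hseg p hp (fun W hW hc =>
        hzM (mem_iUnion₂.mpr ⟨_, Set.mem_union_left _ (Set.mem_union_right _ ⟨W, hW, rfl⟩), hc⟩))
      have hne : (segment ℝ p z).Nonempty := ⟨p, left_mem_segment ℝ p z⟩
      exact (((convex_segment p z).isPathConnected hne).joinedIn p
        (left_mem_segment ℝ p z) z (right_mem_segment ℝ p z)).mono hsub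
    have hj2 : JoinedIn D q z := by
      have hsub := hseg q hq (fun W hW hc =>
        hzM (mem_iUnion₂.mpr ⟨_, Set.mem_union_right _ ⟨W, hW, rfl⟩, hc⟩))
      have hne : (segment ℝ q z).Nonempty := ⟨q, left_mem_segment ℝ q z⟩
      exact (((convex_segment q z).isPathConnected hne).joinedIn q
        (left_mem_segment ℝ q z) z (right_mem_segment ℝ q z)).mono hsub
    exact hj1.trans hj2.symm
  exact (IsPathConnected.isConnected ⟨p₀, hp₀, fun {y} hy => hjoin p₀ hp₀ y hy⟩).isPreconnected


/-! ### The key local structure lemma -/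

theorem exists_mem_interior (hfan : IsFan N F) (hcomp : FanComplete F)
    (hsupp : ⋃₀ {τ ∈ F | spanDim τ = r - 1} = ⋃₀ (A : Set (Set (Vr r))))
    (hrpos : 0 < r) {x : Vr r} (hx : x ∉ ⋃₀ (A : Set (Set (Vr r)))) :
    ∃ γ ∈ F, x ∈ interior γ := by
  classical
  have hFfin := hfan.finite
  set E : Set (Vr r) := ⋃₀ {σ ∈ F | x ∉ σ} with hE
  have hEclosed : IsClosed E := by
    rw [hE, sUnion_eq_biUnion]
    exact (hFfin.subset (sep_subset _ _)).isClosed_biUnion fun σ hσ => cone_closed hfan hσ.1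
  have hxE : x ∉ E := by rintro ⟨σ, ⟨hσF, hxσ⟩, hxmem⟩; exact hxσ hxmem
  obtain ⟨ε, hε, hball⟩ : ∃ ε > 0, ball x ε ⊆ Eᶜ :=
    Metric.mem_nhds_iff.mp (hEclosed.isOpen_compl.mem_nhds hxE)
  have hmem_of_meets : ∀ σ ∈ F, ∀ z ∈ ball x ε, z ∈ σ → x ∈ σ := by
    intro σ hσ z hz hzσ
    by_contra hxσ
    exact (hball hz) ⟨σ, ⟨hσ, hxσ⟩, hzσ⟩
  set 𝒮 : Set (Submodule ℝ (Vr r)) :=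
    (fun σ => Submodule.span ℝ σ) '' {σ ∈ F | x ∈ σ ∧ spanDim σ + 1 < r} with h𝒮
  have h𝒮fin : 𝒮.Finite := (hFfin.subset (sep_subset _ _)).image _
  have h𝒮dim : ∀ W ∈ 𝒮, finrank ℝ W + 1 < r := by
    rintro W ⟨σ, ⟨hσF, hxσ, hd⟩, rfl⟩
    exact hd
  set Nl : Set (Vr r) := ⋃ W ∈ 𝒮, (W : Set (Vr r)) with hNl
  have hNnull : volume Nl = 0 :=
    (measure_biUnion_null_iff h𝒮fin.countable).mpr fun W hW =>
      null_submodule W (ne_top_of_finrank_lt (by have := h𝒮dim W hW; omega))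
  set D := ball x ε \ Nl with hDdef
  have hDpre : IsPreconnected D := conn_ball_diff x hε 𝒮 h𝒮fin h𝒮dim
  have hcover : ∀ z ∈ D, ∃ γ, (γ ∈ F ∧ x ∈ γ ∧ spanDim γ = r) ∧ z ∈ γ := by
    intro z hz
    obtain ⟨γ, hγF, hzγ⟩ := complete_mem hcomp z
    have hxγ : x ∈ γ := hmem_of_meets γ hγF z hz.1 hzγ
    have hle := spanDim_le γ
    have htri : spanDim γ = r ∨ spanDim γ = r - 1 ∨ spanDim γ + 1 < r := by omega
    rcases htri with h | h | h
    · exact ⟨γ, ⟨hγF, hxγ, h⟩, hzγ⟩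
    · exact absurd (hsupp ▸ ⟨γ, ⟨hγF, h⟩, hxγ⟩) hx
    · exact absurd (mem_iUnion₂.mpr
        ⟨Submodule.span ℝ γ, ⟨γ, ⟨hγF, hxγ, h⟩, rfl⟩, Submodule.subset_span hzγ⟩) hz.2
  have hDne : D.Nonempty := by
    by_contra h
    rw [not_nonempty_iff_eq_empty] at h
    have hsub : ball x ε ⊆ Nl := by
      intro z hz
      by_contra hzN
      exact (Set.eq_empty_iff_forall_notMem.mp h z) ⟨hz, hzN⟩
    exact absurd (measure_mono_null hsub hNnull) (measure_ball_pos volume x hε).ne'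
  obtain ⟨z₀, hz₀⟩ := hDne
  obtain ⟨γ₀, hγ₀, hz₀γ⟩ := hcover z₀ hz₀
  have hDsub : D ⊆ γ₀ := by
    by_contra hns
    obtain ⟨z₁, hz₁D, hz₁γ₀⟩ := Set.not_subset.mp hns
    set C₂ : Set (Vr r) := ⋃₀ {γ ∈ F | (x ∈ γ ∧ spanDim γ = r) ∧ γ ≠ γ₀} with hC2
    have hC₂closed : IsClosed C₂ := by
      rw [hC2, sUnion_eq_biUnion]
      exact (hFfin.subset (sep_subset _ _)).isClosed_biUnion fun γ hγ => cone_closed hfan hγ.1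
    apply preconn_no_partition hDpre (cone_closed hfan hγ₀.1) hC₂closed
    · intro z hz
      obtain ⟨γ, hγ, hzγ⟩ := hcover z hz
      by_cases hγeq : γ = γ₀
      · left; exact hγeq ▸ hzγ
      · right; exact ⟨γ, ⟨hγ.1, ⟨hγ.2.1, hγ.2.2⟩, hγeq⟩, hzγ⟩
    · rintro z hz ⟨hzγ₀, γ', ⟨hγ'F, ⟨hxγ', hdγ'⟩, hγ'ne⟩, hzγ'⟩
      set δ := γ₀ ∩ γ' with hδ
      have hδF : δ ∈ F := hfan.faces γ₀ hγ₀.1 δ (hfan.inter γ₀ hγ₀.1 γ' hγ'F).1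
      have hxδ : x ∈ δ := ⟨hγ₀.2.1, hxγ'⟩
      have hzδ : z ∈ δ := ⟨hzγ₀, hzγ'⟩
      have hle := spanDim_le δ
      have htri : spanDim δ = r ∨ spanDim δ = r - 1 ∨ spanDim δ + 1 < r := by omega
      rcases htri with h | h | h
      · obtain ⟨w, hw⟩ := full_interior hfan hδF h
        have he1 : δ = γ₀ := eq_of_mem_interior hfan hδF hγ₀.1 hw (interior_subset hw).1
        have he2 : δ = γ' := eq_of_mem_interior hfan hδF hγ'F hw (interior_subset hw).2
        exact hγ'ne (he2 ▸ he1)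
      · exact hx (hsupp ▸ ⟨δ, ⟨hδF, h⟩, hxδ⟩)
      · exact hz.2 (mem_iUnion₂.mpr
          ⟨Submodule.span ℝ δ, ⟨δ, ⟨hδF, hxδ, h⟩, rfl⟩, Submodule.subset_span hzδ⟩)
    · exact ⟨z₀, hz₀, hz₀γ⟩
    · obtain ⟨γ₁, hγ₁, hz₁γ₁⟩ := hcover z₁ hz₁D
      have hne : γ₁ ≠ γ₀ := fun h => hz₁γ₀ (h ▸ hz₁γ₁)
      exact ⟨z₁, hz₁D, ⟨γ₁, ⟨hγ₁.1, ⟨hγ₁.2.1, hγ₁.2.2⟩, hne⟩, hz₁γ₁⟩⟩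
  have hballsub : ball x ε ⊆ γ₀ := by
    intro w hw
    by_contra hwγ
    have hopen : IsOpen (ball x ε ∩ γ₀ᶜ) :=
      isOpen_ball.inter (cone_closed hfan hγ₀.1).isOpen_compl
    have hsub : ball x ε ∩ γ₀ᶜ ⊆ Nl := by
      rintro z ⟨hz, hzγ⟩
      by_contra hzN
      exact hzγ (hDsub ⟨hz, hzN⟩)
    exact absurd (measure_mono_null hsub hNnull)
      (hopen.measure_pos volume ⟨w, hw, hwγ⟩).ne'
  exact ⟨γ₀, hγ₀.1, mem_interior.mpr ⟨ball x ε, hballsub, isOpen_ball, mem_ball_self hε⟩⟩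

/-! ### Chambers are interiors of the maximal cones -/

theorem isClosed_unionA (hA : ∀ H ∈ A, IsHyp H) : IsClosed (⋃₀ (A : Set (Set (Vr r)))) := by
  rw [sUnion_eq_biUnion]
  apply A.finite_toSet.isClosed_biUnion
  intro H hH
  obtain ⟨f, -, rfl⟩ := hA H hH
  exact isClosed_eq f.continuous_of_finiteDimensional continuous_const

theorem comp_eq_interior (hfan : IsFan N F) (hcomp : FanComplete F)
    (hA : ∀ H ∈ A, IsHyp H)
    (hsupp : ⋃₀ {τ ∈ F | spanDim τ = r - 1} = ⋃₀ (A : Set (Set (Vr r))))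
    (hrpos : 0 < r) {γ : Set (Vr r)} {x : Vr r} (hγ : γ ∈ F) (hx : x ∈ interior γ) :
    connectedComponentIn (⋃₀ (A : Set (Set (Vr r))))ᶜ x = interior γ := by
  set U := (⋃₀ (A : Set (Set (Vr r))))ᶜ with hU
  have hIU : interior γ ⊆ U := interior_subset_U hfan hsupp hrpos hγ
  have hxU : x ∈ U := hIU hx
  have hUγ : U ∩ γ = interior γ := by
    apply Subset.antisymm
    · rintro z ⟨hzU, hzγ⟩
      obtain ⟨γ'', hγ''F, hz''⟩ := exists_mem_interior hfan hcomp hsupp hrpos hzU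
      rwa [eq_of_mem_interior hfan hγ''F hγ hz'' hzγ] at hz''
    · intro z hz
      exact ⟨hIU hz, interior_subset hz⟩
  apply Subset.antisymm
  · have hC := isPreconnected_connectedComponentIn (x := x) (F := U)
    have hCU : connectedComponentIn U x ⊆ U := connectedComponentIn_subset U x
    have hUopen : IsOpen U := (isClosed_unionA hA).isOpen_compl
    have hvopen : IsOpen (U \ γ) := hUopen.sdiff (cone_closed hfan hγ)
    have hcov : connectedComponentIn U x ⊆ interior γ ∪ (U \ γ) := by
      intro w hw
      have hwU := hCU hw
      by_cases hwγ : w ∈ γ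
      · left; exact hUγ ▸ (⟨hwU, hwγ⟩ : w ∈ U ∩ γ)
      · right; exact ⟨hwU, hwγ⟩
    intro z hz
    by_contra hzi
    have hzv : z ∈ U \ γ := by
      rcases hcov hz with h | h
      · exact absurd h hzi
      · exact h
    obtain ⟨w, hwC, hwu, hwv⟩ := hC (interior γ) (U \ γ) isOpen_interior hvopen hcov
      ⟨x, mem_connectedComponentIn hxU, hx⟩ ⟨z, hz, hzv⟩
    exact hwv.2 (interior_subset hwu)
  · exact ((cone_convex hfan hγ).interior).isPreconnected.subset_connectedComponentIn hx hIU

theorem mem_chambers_of_full (hfan : IsFan N F) (hcomp : FanComplete F)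
    (hA : ∀ H ∈ A, IsHyp H)
    (hsupp : ⋃₀ {τ ∈ F | spanDim τ = r - 1} = ⋃₀ (A : Set (Set (Vr r))))
    (hrpos : 0 < r) {γ : Set (Vr r)} (hγ : γ ∈ F) (hd : spanDim γ = r) :
    interior γ ∈ chambers A := by
  obtain ⟨x, hx⟩ := full_interior hfan hγ hd
  exact ⟨x, interior_subset_U hfan hsupp hrpos hγ hx,
    (comp_eq_interior hfan hcomp hA hsupp hrpos hγ hx).symm⟩

theorem closure_interior_eq (hfan : IsFan N F) {γ : Set (Vr r)} (hγ : γ ∈ F)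
    (hne : (interior γ).Nonempty) : closure (interior γ) = γ := by
  obtain ⟨y, hy⟩ := hne
  apply Subset.antisymm
  · calc closure (interior γ) ⊆ closure γ := closure_mono interior_subset
      _ = γ := (cone_closed hfan hγ).closure_eq
  · intro w hw
    apply mem_closure_of_tendsto (f := fun t : ℝ => w + t • (y - w)) (b := 𝓝[>] (0 : ℝ))
    · have hco : Continuous (fun t : ℝ => w + t • (y - w)) := by continuity
      have := hco.tendsto' 0 w (by simp)
      exact this.mono_left nhdsWithin_le_nhds
    · filter_upwards [Ioc_mem_nhdsGT_of_mem (Set.mem_Ico.mpr ⟨le_rfl, zero_lt_one⟩)] with t ht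
      exact (cone_convex hfan hγ).add_smul_sub_mem_interior hw hy ht

theorem chamber_form (hfan : IsFan N F) (hcomp : FanComplete F)
    (hA : ∀ H ∈ A, IsHyp H)
    (hsupp : ⋃₀ {τ ∈ F | spanDim τ = r - 1} = ⋃₀ (A : Set (Set (Vr r))))
    (hrpos : 0 < r) {K : Set (Vr r)} (hK : K ∈ chambers A) :
    ∃ γ ∈ F, (interior γ).Nonempty ∧ K = interior γ ∧ closure K = γ := by
  obtain ⟨x, hxU, rfl⟩ := hK
  obtain ⟨γ, hγF, hxint⟩ := exists_mem_interior hfan hcomp hsupp hrpos hxU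
  have hco := comp_eq_interior hfan hcomp hA hsupp hrpos hγF hxint
  exact ⟨γ, hγF, ⟨x, hxint⟩, hco,
    by rw [hco, closure_interior_eq hfan hγF ⟨x, hxint⟩]⟩

/-! ### Every cone is the intersection of the maximal cones containing it -/

theorem sInter_full (hfan : IsFan N F) (hcomp : FanComplete F)
    {σ : Set (Vr r)} (hσ : σ ∈ F) :
    {γ | γ ∈ F ∧ σ ⊆ γ ∧ spanDim γ = r}.Nonempty ∧
      ⋂₀ {γ | γ ∈ F ∧ σ ⊆ γ ∧ spanDim γ = r} = σ := by
  classical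
  obtain ⟨s, hsN, hσeq, hstrong⟩ := hfan.cones σ hσ
  set y : Vr r := ∑ v ∈ s, v with hy
  have hyσ : y ∈ σ := by
    rw [hσeq]
    exact ⟨fun _ => 1, fun _ => zero_le_one, by simp [hy]⟩
  have hface_y : ∀ τ, IsFaceOf τ σ → y ∈ τ → τ = σ := by
    rintro τ ⟨m, hm, rfl⟩ hyτ
    have hmy : m y = 0 := hyτ.2
    have hall : ∀ v ∈ s, m v = 0 := by
      rw [hy, map_sum] at hmy
      exact (Finset.sum_eq_zero_iff_of_nonneg
        (fun v hv => hm v (hσeq ▸ mem_coneGen_of_mem hv))).mp hmy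
    apply Set.inter_eq_self_of_subset_left
    intro w hw
    rw [hσeq] at hw
    obtain ⟨c, hc, rfl⟩ := hw
    show m _ = 0
    rw [map_sum]
    apply Finset.sum_eq_zero
    intro v hv
    rw [LinearMap.map_smul, hall v hv, smul_eq_mul, mul_zero]
  have hFfin := hfan.finite
  set E : Set (Vr r) := ⋃₀ {σ' ∈ F | y ∉ σ'} with hE
  have hEclosed : IsClosed E := by
    rw [hE, sUnion_eq_biUnion]
    exact (hFfin.subset (sep_subset _ _)).isClosed_biUnion fun σ' hσ' => cone_closed hfan hσ'.1
  have hyE : y ∉ E := by rintro ⟨σ', ⟨hσ'F, hyσ'⟩, hymem⟩; exact hyσ' hymem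
  obtain ⟨ε, hε, hball⟩ : ∃ ε > 0, ball y ε ⊆ Eᶜ :=
    Metric.mem_nhds_iff.mp (hEclosed.isOpen_compl.mem_nhds hyE)
  have hmeets : ∀ σ' ∈ F, ∀ z ∈ ball y ε, z ∈ σ' → σ ⊆ σ' := by
    intro σ' hσ' z hz hzσ'
    have hyσ' : y ∈ σ' := by
      by_contra h
      exact (hball hz) ⟨σ', ⟨hσ', h⟩, hzσ'⟩
    have hface := (hfan.inter σ hσ σ' hσ').1
    have heq := hface_y _ hface ⟨hyσ, hyσ'⟩
    intro w hw
    have : w ∈ σ ∩ σ' := heq.symm ▸ hw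
    exact this.2
  set T := {γ | γ ∈ F ∧ σ ⊆ γ ∧ spanDim γ = r} with hT
  have hTsubF : T ⊆ F := fun γ hγ => hγ.1
  have hTclosed : IsClosed (⋃₀ T) := by
    rw [sUnion_eq_biUnion]
    exact (hFfin.subset hTsubF).isClosed_biUnion fun γ hγ => cone_closed hfan hγ.1
  set Nl : Set (Vr r) := ⋃₀ {σ' ∈ F | spanDim σ' ≠ r} with hNl
  have hNnull : volume Nl = 0 := by
    rw [hNl, sUnion_eq_biUnion]
    refine (measure_biUnion_null_iff ((hFfin.subset (sep_subset _ _)).countable)).mpr ?_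
    rintro σ' ⟨hσ'F, hd⟩
    exact null_small hd
  have hballT : ball y ε ⊆ ⋃₀ T := by
    intro w hw
    by_contra hwT
    have hopen : IsOpen (ball y ε ∩ (⋃₀ T)ᶜ) := isOpen_ball.inter hTclosed.isOpen_compl
    have hsub : ball y ε ∩ (⋃₀ T)ᶜ ⊆ Nl := by
      rintro z ⟨hz, hzT⟩
      obtain ⟨γ, hγF, hzγ⟩ := complete_mem hcomp z
      have hsub' := hmeets γ hγF z hz hzγ
      by_cases hd : spanDim γ = r
      · exact absurd ⟨γ, ⟨hγF, hsub', hd⟩, hzγ⟩ hzT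
      · exact ⟨γ, ⟨hγF, hd⟩, hzγ⟩
    exact absurd (measure_mono_null hsub hNnull)
      (hopen.measure_pos volume ⟨w, hw, hwT⟩).ne'
  have hTne : T.Nonempty := by
    obtain ⟨γ, hγT, -⟩ := mem_sUnion.mp (hballT (mem_ball_self hε))
    exact ⟨γ, hγT⟩
  refine ⟨hTne, Subset.antisymm ?_ (fun z hz => mem_sInter.mpr fun γ hγ => hγ.2.1 hz)⟩
  intro z hz
  set t := ε / (2 * (‖z‖ + 1)) with ht
  have ht0 : 0 < t := by positivity
  have hwball : y - t • z ∈ ball y ε := by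
    rw [mem_ball, dist_eq_norm]
    have : y - t • z - y = -(t • z) := by abel
    rw [this, norm_neg, norm_smul, Real.norm_eq_abs, abs_of_pos ht0, ht]
    rw [div_mul_eq_mul_div, div_lt_iff₀ (by positivity)]
    nlinarith [norm_nonneg z]
  obtain ⟨γ, hγT, hwγ⟩ := mem_sUnion.mp (hballT hwball)
  have hσγ : σ ⊆ γ := hγT.2.1
  have hfaceσγ : IsFaceOf σ γ := by
    have h := (hfan.inter σ hσ γ hγT.1).2
    rwa [Set.inter_eq_self_of_subset_left hσγ] at h
  obtain ⟨m, hm, hmeq⟩ := hfaceσγ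
  have hmy : m y = 0 := by
    have : y ∈ γ ∩ {x | m x = 0} := hmeq ▸ hyσ
    exact this.2
  have hmw : 0 ≤ m (y - t • z) := hm _ hwγ
  have hzγ : z ∈ γ := mem_sInter.mp hz γ hγT
  have hmz : m z = 0 := by
    have h1 : 0 ≤ m z := hm z hzγ
    have h2 : m (y - t • z) = -(t * m z) := by
      rw [map_sub, LinearMap.map_smul, hmy, smul_eq_mul, zero_sub]
    nlinarith
  rw [hmeq]
  exact ⟨hzγ, hmz⟩

theorem sInter_mem_of_subset (hfan : IsFan N F) (𝒞 : Set (Set (Vr r))) (hfin : 𝒞.Finite) :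
    𝒞.Nonempty → 𝒞 ⊆ F → ⋂₀ 𝒞 ∈ F := by
  refine Set.Finite.induction_on (motive := fun 𝒞 _ => 𝒞.Nonempty → 𝒞 ⊆ F → ⋂₀ 𝒞 ∈ F) 𝒞 hfin ?_ ?_
  · rintro ⟨x, hx⟩ _
    exact absurd hx (Set.notMem_empty x)
  · rintro a s ha hsfin ih - hsub
    rw [Set.sInter_insert]
    rcases s.eq_empty_or_nonempty with rfl | hsne
    · rw [Set.sInter_empty, Set.inter_univ]
      exact hsub (Set.mem_insert _ _)
    · have hδ := ih hsne (fun w hw => hsub (Set.mem_insert_of_mem a hw))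
      have haF := hsub (Set.mem_insert a s)
      exact hfan.faces a haF _ (hfan.inter a haF _ hδ).1


end Stmt4Aux

/-- a strongly symmetric fan equals the set of all intersections of
closed chambers of its arrangement of hyperplanes, and is centrally symmetric. -/
theorem stmt4 {r : ℕ} (N : AddSubgroup (Vr r)) (F : Set (Set (Vr r)))
    (hN : IsLattice N) (hfan : IsFan N F) (hcomp : FanComplete F)
    (A : Finset (Set (Vr r))) (hA : ∀ H ∈ A, IsHyp H)
    (hsupp : ⋃₀ {τ ∈ F | spanDim τ = r - 1} = ⋃₀ (A : Set (Set (Vr r)))) :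
    F = closedChamberInts A ∧ CSymm F := by
  classical
  rcases Nat.eq_zero_or_pos r with hr0 | hrpos
  · exfalso
    subst hr0
    obtain ⟨σ₀, hσ₀⟩ := hfan.nonempty
    obtain ⟨s, -, hσeq, -⟩ := hfan.cones σ₀ hσ₀
    have h0 : (0 : Vr 0) ∈ σ₀ := by rw [hσeq]; exact Stmt4Aux.zero_mem_coneGen s
    have hd : spanDim σ₀ = 0 - 1 := by
      have := Stmt4Aux.spanDim_le σ₀
      omega
    have hmem : (0 : Vr 0) ∈ ⋃₀ ((A : Set (Set (Vr 0)))) := hsupp ▸ ⟨σ₀, ⟨hσ₀, hd⟩, h0⟩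
    obtain ⟨H, hHA, -⟩ := hmem
    obtain ⟨f, hf, -⟩ := hA H hHA
    apply hf
    apply LinearMap.ext
    intro v
    rw [Subsingleton.elim v (0 : Vr 0), map_zero]
    simp
  have hFeq : F = closedChamberInts A := by
    apply Set.Subset.antisymm
    · intro σ hσ
      obtain ⟨hTne, hTeq⟩ := Stmt4Aux.sInter_full hfan hcomp hσ
      refine ⟨interior '' {γ | γ ∈ F ∧ σ ⊆ γ ∧ spanDim γ = r}, hTne.image _, ?_, ?_⟩
      · rintro K ⟨γ, hγ, rfl⟩
        exact Stmt4Aux.mem_chambers_of_full hfan hcomp hA hsupp hrpos hγ.1 hγ.2.2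
      · have himg : closure '' (interior '' {γ | γ ∈ F ∧ σ ⊆ γ ∧ spanDim γ = r})
            = {γ | γ ∈ F ∧ σ ⊆ γ ∧ spanDim γ = r} := by
          rw [← Set.image_comp]
          have hc : ∀ γ ∈ {γ | γ ∈ F ∧ σ ⊆ γ ∧ spanDim γ = r},
              (closure ∘ interior) γ = γ := by
            intro γ hγ
            exact Stmt4Aux.closure_interior_eq hfan hγ.1
              (Stmt4Aux.full_interior hfan hγ.1 hγ.2.2)
          rw [Set.image_congr hc, Set.image_id']
        rw [himg, hTeq]
    · rintro σ ⟨S, hSne, hSch, rfl⟩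
      have hsubF : closure '' S ⊆ F := by
        rintro K' ⟨K, hK, rfl⟩
        obtain ⟨γ, hγF, -, -, hcl⟩ :=
          Stmt4Aux.chamber_form hfan hcomp hA hsupp hrpos (hSch hK)
        exact hcl ▸ hγF
      exact Stmt4Aux.sInter_mem_of_subset hfan _ (hfan.finite.subset hsubF)
        (hSne.image _) hsubF
  refine ⟨hFeq, ?_⟩
  set U := (⋃₀ (A : Set (Set (Vr r))))ᶜ with hU
  have hUsymm : ∀ z : Vr r, z ∈ U → -z ∈ U := by
    intro z hz hmem
    apply hz
    obtain ⟨H, hHA, hzH⟩ := hmem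
    obtain ⟨f, -, hHeq⟩ := hA H hHA
    refine ⟨H, hHA, ?_⟩
    rw [hHeq] at hzH ⊢
    simpa using hzH
  have hkey : ∀ x ∈ U, -(connectedComponentIn U x) ⊆ connectedComponentIn U (-x) := by
    intro x hx
    have h1 : IsPreconnected (-(connectedComponentIn U x) : Set (Vr r)) := by
      have h2 := (isPreconnected_connectedComponentIn (x := x) (F := U)).image
        (fun w : Vr r => -w) continuous_neg.continuousOn
      rwa [Set.image_neg_eq_neg] at h2
    apply h1.subset_connectedComponentIn
    · rw [Set.mem_neg, neg_neg]
      exact mem_connectedComponentIn hx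
    · intro w hw
      rw [Set.mem_neg] at hw
      have hwU := hUsymm _ (connectedComponentIn_subset U x hw)
      rwa [neg_neg] at hwU
  have hcompneg : ∀ x ∈ U, connectedComponentIn U (-x) = -(connectedComponentIn U x) := by
    intro x hx
    apply Set.Subset.antisymm
    · have h2 := hkey (-x) (hUsymm x hx)
      rw [neg_neg] at h2
      intro w hw
      rw [Set.mem_neg]
      apply h2
      rw [Set.mem_neg, neg_neg]
      exact hw
    · exact hkey x hx
  have hclneg : ∀ K : Set (Vr r), closure (-K) = -closure K := by
    intro K
    have h := (Homeomorph.neg (Vr r)).image_closure K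
    rw [show ⇑(Homeomorph.neg (Vr r)) = fun w : Vr r => -w from rfl] at h
    rw [Set.image_neg_eq_neg, Set.image_neg_eq_neg] at h
    exact h.symm
  intro σ hσ
  rw [hFeq] at hσ ⊢
  obtain ⟨S, hSne, hSch, rfl⟩ := hσ
  refine ⟨(fun K => -K) '' S, hSne.image _, ?_, ?_⟩
  · rintro K' ⟨K, hK, rfl⟩
    obtain ⟨x, hxU, hKeq⟩ := hSch hK
    refine ⟨-x, hUsymm x hxU, ?_⟩
    rw [hcompneg x hxU, ← hKeq]
  · ext w
    constructor
    · intro hw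
      rw [Set.mem_neg] at hw
      apply Set.mem_sInter.mpr
      rintro T' ⟨K', ⟨K, hK, rfl⟩, rfl⟩
      show w ∈ closure (-K)
      rw [hclneg K, Set.mem_neg]
      exact Set.mem_sInter.mp hw (closure K) ⟨K, hK, rfl⟩
    · intro hw
      rw [Set.mem_neg]
      apply Set.mem_sInter.mpr
      rintro T ⟨K, hK, rfl⟩
      have h := Set.mem_sInter.mp hw (closure (-K)) ⟨-K, ⟨K, hK, rfl⟩, rfl⟩
      rw [hclneg K, Set.mem_neg] at h
      exact h
end
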